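/- Let (λ_k) be a nondecreasing sequence of nonnegative reals tending to infinity (the eigenvalues of the Laplacian on a compact manifold), and let u = Σ_k c_k ψ_k with (ψ_k) an orthonormal basis of L² such that −Δ ψ_k = λ_k ψ_k. Then for every z ∈ ℂ \ ℝ₋, ‖u‖_{L²} ≤ |z|^{−1/2} (Re √z)^{−1} ‖(−Δ + z)u‖_{L²}. -/

import Mathlib

open Complex in
lemma key_ineq (z : ℂ) (hz : ¬ (z.re ≤ 0 ∧ z.im = 0)) :
    (0 < ‖z‖ ^ ((1:ℝ)/2) * (z ^ (1/2 : ℂ)).re) ∧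
    ∀ s : ℝ, 0 ≤ s →
      ‖z‖ ^ ((1:ℝ)/2) * (z ^ (1/2 : ℂ)).re ≤ ‖(↑s + z : ℂ)‖ := by
  have hz0 : z ≠ 0 := by rintro rfl; exact hz ⟨le_rfl, rfl⟩
  have hr : 0 < ‖z‖ := by simpa using hz0
  have harg_lt : z.arg < Real.pi := by
    rcases lt_or_eq_of_le (Complex.arg_le_pi z) with h | h
    · exact h
    · exact absurd (Complex.arg_eq_pi_iff.mp h) (fun ⟨h1, h2⟩ => hz ⟨h1.le, h2⟩)
  have harg_gt := Complex.neg_pi_lt_arg z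
  have hcos : 0 < Real.cos (z.arg / 2) := by
    apply Real.cos_pos_of_mem_Ioo
    constructor <;> [linarith; linarith]
  have hre : (z ^ (1/2 : ℂ)).re = ‖z‖ ^ ((1:ℝ)/2) * Real.cos (z.arg / 2) := by
    have : (1/2 : ℂ) = ((1/2 : ℝ) : ℂ) := by norm_num
    rw [this, Complex.cpow_ofReal_re]
    ring_nf
  have hC : ‖z‖ ^ ((1:ℝ)/2) * (z ^ (1/2 : ℂ)).re
      = ‖z‖ * Real.cos (z.arg / 2) := by
    rw [hre, ← mul_assoc, ← Real.rpow_add hr]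
    norm_num
  refine ⟨by rw [hC]; positivity, fun s hs => ?_⟩
  rw [hC]
  set r := ‖z‖ with hrdef
  set c := Real.cos z.arg with hcdef
  have hsq : (r * Real.cos (z.arg / 2)) ^ 2 ≤ (‖(↑s + z : ℂ)‖) ^ 2 := by
    have hcos2 : Real.cos (z.arg / 2) ^ 2 = 1 / 2 + c / 2 := by
      rw [Real.cos_sq (z.arg / 2), hcdef]; ring_nf
    have hzre : z.re = r * c := by
      rw [hcdef, Complex.cos_arg hz0]; field_simp; rw [hrdef]
    have hnsq : r ^ 2 = z.re ^ 2 + z.im ^ 2 := by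
      rw [hrdef, Complex.sq_norm, Complex.normSq_apply]; ring
    have hc1 : c ≤ 1 := Real.cos_le_one _
    have hc2 : -1 ≤ c := Real.neg_one_le_cos _
    have lhs_eq : (r * Real.cos (z.arg / 2)) ^ 2 = r ^ 2 * (1 / 2 + c / 2) := by
      rw [mul_pow, hcos2]
    have him : z.im ^ 2 = r ^ 2 - (r * c) ^ 2 := by
      rw [hnsq, hzre]; ring
    rw [← Complex.normSq_eq_norm_sq, Complex.normSq_apply]
    simp only [Complex.add_re, Complex.add_im, Complex.ofReal_re, Complex.ofReal_im]
    rw [lhs_eq, hzre]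
    rcases le_or_gt 0 c with hc | hc
    · nlinarith [mul_nonneg hs (mul_nonneg hr.le hc), sq_nonneg s,
        mul_pos hr hr]
    · nlinarith [sq_nonneg (s + r * c),
        mul_nonneg (mul_nonneg hr.le hr.le)
          (mul_nonneg (by linarith : (0:ℝ) ≤ 1 - 2 * c) (by linarith : (0:ℝ) ≤ 1 + c))]
  have h1 : 0 ≤ r * Real.cos (z.arg / 2) := by positivity
  nlinarith [norm_nonneg (↑s + z : ℂ)]

open scoped ComplexOrder in
theorem L2_resolvent_estimate
    {H : Type*} [NormedAddCommGroup H] [InnerProductSpace ℂ H] [CompleteSpace H]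
    (b : HilbertBasis ℕ ℂ H) (lam : ℕ → ℝ) (hlam : ∀ k, 0 ≤ lam k)
    (z : ℂ) (hz : ¬ (z.re ≤ 0 ∧ z.im = 0))
    (u v : H) (hv : ∀ k, b.repr v k = (↑(lam k) + z) * b.repr u k) :
    ‖u‖ ≤ ‖z‖ ^ (-(1/2) : ℝ) * ((z ^ (1/2 : ℂ)).re)⁻¹ * ‖v‖ := by
  obtain ⟨hCpos, hkey⟩ := key_ineq z hz
  set C := ‖z‖ ^ ((1:ℝ)/2) * (z ^ (1/2 : ℂ)).re with hCdef
  have hconst : ‖z‖ ^ (-(1/2) : ℝ) * ((z ^ (1/2 : ℂ)).re)⁻¹ = C⁻¹ := by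
    rw [hCdef, mul_inv, ← Real.rpow_neg (norm_nonneg z)]
  rw [hconst]
  -- main estimate: C * ‖u‖ ≤ ‖v‖
  have hpt : ∀ k, C * ‖b.repr u k‖ ≤ ‖b.repr v k‖ := by
    intro k
    rw [hv k, norm_mul]
    refine mul_le_mul_of_nonneg_right ?_ (norm_nonneg _)
    exact hkey (lam k) (hlam k)
  have hp2 : 0 < (2 : ENNReal).toReal := by norm_num
  have hfsum : Summable (fun k => ‖b.repr u k‖ ^ (2 : ENNReal).toReal) :=
    (lp.memℓp (b.repr u)).summable hp2
  have hgsum : Summable (fun k => ‖b.repr v k‖ ^ (2 : ENNReal).toReal) :=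
    (lp.memℓp (b.repr v)).summable hp2
  have hu2 : ‖b.repr u‖ ^ (2 : ENNReal).toReal = ∑' k, ‖b.repr u k‖ ^ (2 : ENNReal).toReal :=
    lp.norm_rpow_eq_tsum hp2 _
  have hv2 : ‖b.repr v‖ ^ (2 : ENNReal).toReal = ∑' k, ‖b.repr v k‖ ^ (2 : ENNReal).toReal :=
    lp.norm_rpow_eq_tsum hp2 _
  have htr : (2 : ENNReal).toReal = (2 : ℝ) := by norm_num
  rw [htr] at hu2 hv2 hfsum hgsum
  simp only [Real.rpow_two] at hu2 hv2 hfsum hgsum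
  have htsum : C ^ 2 * ∑' k, ‖b.repr u k‖ ^ 2 ≤ ∑' k, ‖b.repr v k‖ ^ 2 := by
    rw [← tsum_mul_left]
    refine Summable.tsum_le_tsum (fun k => ?_) (hfsum.mul_left _) hgsum
    calc C ^ 2 * ‖b.repr u k‖ ^ 2 = (C * ‖b.repr u k‖) ^ 2 := by ring
    _ ≤ ‖b.repr v k‖ ^ 2 :=
        pow_le_pow_left₀ (mul_nonneg hCpos.le (norm_nonneg _)) (hpt k) 2
  have hnu : ‖b.repr u‖ = ‖u‖ := b.repr.norm_map u
  have hnv : ‖b.repr v‖ = ‖v‖ := b.repr.norm_map v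
  rw [hnu] at hu2; rw [hnv] at hv2
  have hmain : C * ‖u‖ ≤ ‖v‖ := by
    have hsq : (C * ‖u‖) ^ 2 ≤ ‖v‖ ^ 2 := by
      calc (C * ‖u‖) ^ 2 = C ^ 2 * ‖u‖ ^ 2 := by ring
      _ = C ^ 2 * ∑' k, ‖b.repr u k‖ ^ 2 := by rw [hu2]
      _ ≤ ∑' k, ‖b.repr v k‖ ^ 2 := htsum
      _ = ‖v‖ ^ 2 := hv2.symm
    nlinarith [norm_nonneg v, norm_nonneg u, mul_nonneg hCpos.le (norm_nonneg u)]
  rw [mul_comm C⁻¹, ← div_eq_mul_inv, le_div_iff₀ hCpos, mul_comm]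
  exact hmain
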